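/- Let n ≥ 2 and let B be an n×n complex matrix with Σ_{i,j} |B_{ij}|² = 1. Set P := Σ_i |B_{ii}|². Then (1/n)·Σ_{i≠j} |(Bᴴ B)_{ij}| ≤ ((n−2)/n)·(1−P) + (2/n)·√((n−1)·P·(1−P)). -/

import Mathlib

open Matrix Finset

private lemma row_bound (n : ℕ) (hn : 2 ≤ n) (a : Fin n → ℝ) (ha : ∀ i, 0 ≤ a i) (k : Fin n) :
    ∑ i, ∑ j ∈ univ.filter (fun j => j ≠ i), a i * a j ≤
      ((n : ℝ) - 2) * (∑ i ∈ univ.filter (fun i => i ≠ k), a i ^ 2) +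
        2 * Real.sqrt ((n : ℝ) - 1) *
          Real.sqrt ((a k ^ 2) * ∑ i ∈ univ.filter (fun i => i ≠ k), a i ^ 2) := by
  set q : ℝ := ∑ i ∈ univ.filter (fun i => i ≠ k), a i ^ 2 with hq
  set T : ℝ := ∑ i ∈ univ.filter (fun i => i ≠ k), a i with hT
  have hq0 : 0 ≤ q := sum_nonneg fun i _ => sq_nonneg _
  have hT0 : 0 ≤ T := sum_nonneg fun i _ => ha i
  have hcard : (univ.filter (fun i => i ≠ k)).card = n - 1 := by
    rw [filter_ne', card_erase_of_mem (mem_univ k), card_univ, Fintype.card_fin]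
  have hT2 : T ^ 2 ≤ ((n : ℝ) - 1) * q := by
    have := sq_sum_le_card_mul_sum_sq (s := univ.filter (fun i => i ≠ k)) (f := a)
    rw [hcard] at this
    calc T ^ 2 ≤ ((n - 1 : ℕ) : ℝ) * q := by exact_mod_cast this
    _ = ((n : ℝ) - 1) * q := by
        congr 1
        have : (1:ℕ) ≤ n := le_trans one_le_two hn
        push_cast [Nat.cast_sub this]
        ring
  have hTle : T ≤ Real.sqrt (((n : ℝ) - 1) * q) := by
    have := Real.sqrt_le_sqrt hT2
    · calc T = Real.sqrt (T ^ 2) := (Real.sqrt_sq hT0).symm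
      _ ≤ Real.sqrt (((n : ℝ) - 1) * q) := Real.sqrt_le_sqrt hT2
  -- LHS = S² - ∑ a i ²  where S = ∑ a i
  have hsplit : ∀ i : Fin n, ∑ j ∈ univ.filter (fun j => j ≠ i), a i * a j
      = a i * (∑ j, a j) - a i ^ 2 := by
    intro i
    rw [← mul_sum, filter_ne', sum_erase_eq_sub (mem_univ i)]
    ring
  have hS : (∑ j, a j) = a k + T := by
    rw [hT, filter_ne', add_comm, sum_erase_eq_sub (mem_univ k)]
    ring
  have hLHS : ∑ i, ∑ j ∈ univ.filter (fun j => j ≠ i), a i * a j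
      = (∑ j, a j) ^ 2 - ∑ i, a i ^ 2 := by
    rw [sum_congr rfl fun i _ => hsplit i, sum_sub_distrib, ← sum_mul]
    ring
  have hsumsq : ∑ i, a i ^ 2 = a k ^ 2 + q := by
    rw [hq, filter_ne', add_comm, sum_erase_eq_sub (mem_univ k)]
    ring
  rw [hLHS, hS, hsumsq]
  have hkey : (a k + T) ^ 2 - (a k ^ 2 + q)
      = 2 * (a k * T) + (T ^ 2 - q) := by ring
  rw [hkey]
  have hn1 : (0:ℝ) ≤ (n : ℝ) - 1 := by
    have : (2:ℝ) ≤ n := by exact_mod_cast hn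
    linarith
  have h1 : a k * T ≤ Real.sqrt (((n : ℝ) - 1)) * Real.sqrt (a k ^ 2 * q) := by
    calc a k * T ≤ a k * Real.sqrt (((n : ℝ) - 1) * q) :=
          mul_le_mul_of_nonneg_left hTle (ha k)
    _ = Real.sqrt (((n : ℝ) - 1)) * Real.sqrt (a k ^ 2 * q) := by
        rw [Real.sqrt_mul hn1 q, Real.sqrt_mul (sq_nonneg _) q,
          Real.sqrt_sq (ha k)]
        ring
  have h2 : T ^ 2 - q ≤ ((n : ℝ) - 2) * q := by nlinarith
  nlinarith [h1, h2]

theorem duality_lemma_matrix_core (n : ℕ) (hn : 2 ≤ n)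
    (B : Matrix (Fin n) (Fin n) ℂ)
    (hB : ∑ i, ∑ j, ‖B i j‖ ^ 2 = 1)
    (P : ℝ) (hP : P = ∑ i, ‖B i i‖ ^ 2) :
    (1 / n) * ∑ i, ∑ j ∈ univ.filter (fun j => j ≠ i), ‖(Bᴴ * B) i j‖ ≤
      (((n : ℝ) - 2) / n) * (1 - P) +
        (2 / n) * Real.sqrt (((n : ℝ) - 1) * P * (1 - P)) := by
  have hn0 : (0:ℝ) < n := by positivity
  set a : Fin n → Fin n → ℝ := fun k i => ‖B k i‖ with haa
  set p : Fin n → ℝ := fun k => a k k ^ 2 with hp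
  set q : Fin n → ℝ := fun k => ∑ i ∈ univ.filter (fun i => i ≠ k), a k i ^ 2 with hq
  have hp0 : ∀ k, 0 ≤ p k := fun k => sq_nonneg _
  have hq0 : ∀ k, 0 ≤ q k := fun k => sum_nonneg fun i _ => sq_nonneg _
  have hsum_p : ∑ k, p k = P := hP.symm
  have hsum_q : ∑ k, q k = 1 - P := by
    have : ∀ k : Fin n, q k = (∑ i, a k i ^ 2) - p k := by
      intro k
      rw [hq, hp]
      simp only [filter_ne', sum_erase_eq_sub (mem_univ k)]
    rw [sum_congr rfl fun k _ => this k, sum_sub_distrib, hsum_p, hB]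
  have hP1 : P ≤ 1 := by
    have := sum_nonneg (fun k (_ : k ∈ univ) => hq0 k)
    rw [hsum_q] at this; linarith
  have hP0 : 0 ≤ P := hP ▸ sum_nonneg fun i _ => sq_nonneg _
  -- step 1: entrywise bound
  have habs : ∀ i j : Fin n, ‖(Bᴴ * B) i j‖ ≤ ∑ k, a k i * a k j := by
    intro i j
    have : (Bᴴ * B) i j = ∑ k, (starRingEnd ℂ) (B k i) * B k j := by
      simp [Matrix.mul_apply, Matrix.conjTranspose_apply]
    rw [this]
    refine le_trans (norm_sum_le _ _) (le_of_eq ?_)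
    refine sum_congr rfl fun k _ => ?_
    rw [norm_mul, Complex.norm_conj]
  -- step 2: bound the double sum
  have hmain : ∑ i, ∑ j ∈ univ.filter (fun j => j ≠ i), ‖(Bᴴ * B) i j‖
      ≤ ((n : ℝ) - 2) * (1 - P) + 2 * Real.sqrt ((n : ℝ) - 1) * ∑ k, Real.sqrt (p k * q k) := by
    calc ∑ i, ∑ j ∈ univ.filter (fun j => j ≠ i), ‖(Bᴴ * B) i j‖
        ≤ ∑ i, ∑ j ∈ univ.filter (fun j => j ≠ i), ∑ k, a k i * a k j := by
          refine sum_le_sum fun i _ => sum_le_sum fun j _ => habs i j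
      _ = ∑ k, ∑ i, ∑ j ∈ univ.filter (fun j => j ≠ i), a k i * a k j := by
          rw [show (∑ i, ∑ j ∈ univ.filter (fun j => j ≠ i), ∑ k, a k i * a k j)
              = ∑ i, ∑ k, ∑ j ∈ univ.filter (fun j => j ≠ i), a k i * a k j from
            sum_congr rfl fun i _ => sum_comm, sum_comm]
      _ ≤ ∑ k, (((n : ℝ) - 2) * q k + 2 * Real.sqrt ((n : ℝ) - 1) * Real.sqrt (p k * q k)) := by
          refine sum_le_sum fun k _ => ?_
          exact row_bound n hn (a k) (fun i => norm_nonneg _) k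
      _ = ((n : ℝ) - 2) * (1 - P) + 2 * Real.sqrt ((n : ℝ) - 1) * ∑ k, Real.sqrt (p k * q k) := by
          rw [sum_add_distrib, ← mul_sum, ← mul_sum, hsum_q]
  -- step 3: Cauchy-Schwarz
  have hCS : ∑ k, Real.sqrt (p k * q k) ≤ Real.sqrt P * Real.sqrt (1 - P) := by
    calc ∑ k, Real.sqrt (p k * q k) = ∑ k, Real.sqrt (p k) * Real.sqrt (q k) := by
          refine sum_congr rfl fun k _ => Real.sqrt_mul (hp0 k) _
      _ ≤ Real.sqrt (∑ k, p k) * Real.sqrt (∑ k, q k) :=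
          Real.sum_sqrt_mul_sqrt_le _ hp0 hq0
      _ = Real.sqrt P * Real.sqrt (1 - P) := by rw [hsum_p, hsum_q]
  have hn2 : (0:ℝ) ≤ (n:ℝ) - 2 := by
    have : (2:ℝ) ≤ n := by exact_mod_cast hn
    linarith
  have hn1 : (0:ℝ) ≤ (n:ℝ) - 1 := by linarith
  have hsqrt : Real.sqrt (((n : ℝ) - 1) * P * (1 - P))
      = Real.sqrt ((n : ℝ) - 1) * (Real.sqrt P * Real.sqrt (1 - P)) := by
    rw [Real.sqrt_mul (mul_nonneg hn1 hP0), Real.sqrt_mul hn1, mul_assoc]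
  have hfinal : ∑ i, ∑ j ∈ univ.filter (fun j => j ≠ i), ‖(Bᴴ * B) i j‖
      ≤ ((n : ℝ) - 2) * (1 - P) + 2 * Real.sqrt (((n : ℝ) - 1) * P * (1 - P)) := by
    rw [hsqrt]
    have := mul_le_mul_of_nonneg_left hCS (by positivity : (0:ℝ) ≤ 2 * Real.sqrt ((n:ℝ)-1))
    nlinarith [hmain]
  refine le_trans (mul_le_mul_of_nonneg_left hfinal (by positivity)) (le_of_eq ?_)
  field_simp
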